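/- Let q be a prime power, α a multiplicative generator of F_{q^n}^×, and I = {i_1,...,i_n} distinct integers. If the minimal polynomial of α does not divide ∑_{j=1}^n c_j x^{i_j} for any nonzero (c_1,...,c_n) ∈ F_q^n, then for any basis B of F_{q^n} over F_q and any nonzero v ∈ F_q^n, the sequence Λ(α, B, v) defined by Λ_j = v^T f_B(α^j) for 0 ≤ j ≤ q^n - 2 is an I*-cycle: every nonzero word W ∈ F_q^n appears as (Λ_{i_1+t}, ..., Λ_{i_n+t}) for some t ∈ Z_{q^n - 1} (indices mod q^n - 1). -/

import Mathlib

/-- With `L/K` finite fields of degree `n`, `α` a generator of `Lˣ`, `B` a basis,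
`v ≠ 0`, and distinct exponents `i_1, …, i_n`: if the minimal polynomial of `α`
divides no nonzero combination `∑ c_j x^{i_j}`, then `Λ(α, B, v)`, defined on
`ZMod (card L - 1)` by `Λ_j = vᵀ f_B(α^j)`, is an `I*`-cycle: every nonzero word
`W ∈ Kⁿ` appears as `(Λ_{i_1+t}, …, Λ_{i_n+t})` for some `t`. -/
theorem stmt_8 (K L : Type*) [Field K] [Field L] [Algebra K L]
    [Fintype K] [Fintype L]
    (n : ℕ) (hn : 1 ≤ n) (B : Module.Basis (Fin n) K L)
    (α : Lˣ) (hα : ∀ u : Lˣ, u ∈ Subgroup.zpowers α)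
    (v : Fin n → K) (hv : v ≠ 0)
    (i : Fin n → ℕ) (hi : Function.Injective i)
    (hmin : ∀ c : Fin n → K, c ≠ 0 →
      ¬ (minpoly K (α : L) ∣ ∑ j, Polynomial.C (c j) * Polynomial.X ^ (i j))) :
    ∀ W : Fin n → K, W ≠ 0 → ∃ t : ZMod (Fintype.card L - 1),
      ∀ j : Fin n,
        (fun s : ZMod (Fintype.card L - 1) =>
          ∑ k, v k * B.repr ((α : L) ^ s.val) k) (((i j : ℕ) : ZMod (Fintype.card L - 1)) + t)
          = W j := by
  intro W hW
  classical
  set N := Fintype.card L - 1 with hN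
  have hNpos : 0 < N := by
    have : 1 < Fintype.card L := Fintype.one_lt_card
    omega
  haveI : NeZero N := ⟨hNpos.ne'⟩
  haveI : Nonempty (Fin n) := ⟨⟨0, hn⟩⟩
  -- linear functional ℓ
  let ℓ : L →ₗ[K] K :=
    { toFun := fun x => ∑ k, v k * B.repr x k
      map_add' := by intro x y; simp [mul_add, Finset.sum_add_distrib]
      map_smul' := by
        intro c x
        simp [Finset.mul_sum]
        congr 1; funext k; ring }
  -- independence of the α^{i j}
  have hindep : LinearIndependent K (fun j : Fin n => (α : L) ^ (i j)) := by
    rw [Fintype.linearIndependent_iff]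
    intro c hc
    by_contra hne
    push_neg at hne
    obtain ⟨j0, hj0⟩ := hne
    have hcne : c ≠ 0 := fun h => hj0 (by simp [h])
    refine hmin c hcne (minpoly.dvd K _ ?_)
    rw [map_sum]
    simpa [Algebra.smul_def] using hc
  have hfr : Module.finrank K L = n := by
    rw [Module.finrank_eq_card_basis B, Fintype.card_fin]
  -- ψ
  let ψ : L →ₗ[K] (Fin n → K) :=
    { toFun := fun x j => ℓ ((α : L) ^ (i j) * x)
      map_add' := by intro x y; funext j; simp [mul_add]
      map_smul' := by intro c x; funext j; simp [mul_smul_comm] }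
  have hℓne : ℓ ≠ 0 := by
    obtain ⟨k0, hk0⟩ := Function.ne_iff.mp hv
    intro h
    apply hk0
    have h1 : ℓ (B k0) = v k0 := by
      simp [ℓ, Module.Basis.repr_self, Finsupp.single_apply]
    rw [h] at h1
    simpa using h1.symm
  have hinj : Function.Injective ψ := by
    rw [← LinearMap.ker_eq_bot, Submodule.eq_bot_iff]
    intro x hx
    by_contra hxne
    have hindep' : LinearIndependent K (fun j : Fin n => (α : L) ^ (i j) * x) :=
      hindep.map' (LinearMap.mulRight K x)
        (LinearMap.ker_eq_bot.2 (mul_left_injective₀ hxne))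
    let C : Module.Basis (Fin n) K L := basisOfLinearIndependentOfCardEqFinrank hindep'
      (by rw [Fintype.card_fin, hfr])
    have hC : ∀ j, (C j : L) = (α : L) ^ (i j) * x := fun j => by
      simp [C, coe_basisOfLinearIndependentOfCardEqFinrank]
    have : ℓ = 0 := by
      apply Module.Basis.ext C
      intro j
      rw [hC j]
      have := congrFun (LinearMap.mem_ker.mp hx ▸ rfl : ψ x = 0) j
      simpa [ψ] using this
    exact hℓne this
  have hsurj : Function.Surjective ψ :=
    (LinearMap.injective_iff_surjective_of_finrank_eq_finrank
      (by rw [hfr, Module.finrank_fin_fun])).mp hinj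
  obtain ⟨x, hx⟩ := hsurj W
  have hxne : x ≠ 0 := by
    intro h
    apply hW
    rw [← hx, h, map_zero]
  obtain ⟨z, hz⟩ := hα (Units.mk0 x hxne)
  refine ⟨(z : ZMod N), fun j => ?_⟩
  have hord : (orderOf α : ℤ) ∣ (N : ℤ) := by
    exact_mod_cast Int.natCast_dvd_natCast.mpr
      (by rw [hN, ← Fintype.card_units]; exact orderOf_dvd_card)
  set s : ZMod N := ((i j : ℕ) : ZMod N) + (z : ZMod N) with hs
  have hmod : ((s.val : ℤ)) ≡ ((i j : ℤ) + z) [ZMOD (orderOf α)] := by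
    refine Int.ModEq.of_dvd hord ?_
    have : ((s.val : ℤ) : ZMod N) = (((i j : ℤ) + z : ℤ) : ZMod N) := by
      push_cast
      rw [ZMod.natCast_val, ZMod.cast_id]
    exact (ZMod.intCast_eq_intCast_iff _ _ _).mp this
  have hu : α ^ ((s.val : ℤ)) = α ^ ((i j : ℤ) + z) := by
    rw [zpow_eq_zpow_iff_modEq]; exact hmod
  have hz' : α ^ z = Units.mk0 x hxne := hz
  have hL : (α : L) ^ s.val = (α : L) ^ (i j) * x := by
    rw [zpow_natCast, zpow_add, zpow_natCast, hz'] at hu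
    have h2 := congrArg (Units.val) hu
    simpa [Units.val_pow_eq_pow_val] using h2
  show ∑ k, v k * B.repr ((α : L) ^ s.val) k = W j
  rw [hL]
  have := congrFun hx j
  simpa [ψ, ℓ] using this
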